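/- arXiv:2510.15916 — 5 statements merged into one kernel-verified Lean document; each statement's English description precedes it below -/
import Mathlib

section
/- Telescoping formula: if Z is a consistent IPR with respect to u, then the values v_k = z_{kn} satisfy v_k + (n-k-1)·u = Σ_{i=k}^{n-1} z_{i(i+1)} for all k = 1,...,n-1, where multiplication of an interval by a nonnegative integer m means the m-fold Minkowski sum. -/
/-- Minkowski (interval) addition: componentwise addition of endpoints. -/
def Iadd (x y : ℝ × ℝ) : ℝ × ℝ := (x.1 + y.1, x.2 + y.2)

/-- Interval negation: -[a,b] = [-b,-a]. -/
def Ineg (x : ℝ × ℝ) : ℝ × ℝ := (-x.2, -x.1)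

/-- Scalar multiple of an interval by a nonnegative integer (m-fold Minkowski sum):
m·[a,b] = [m·a, m·b]. -/
def Ismul (m : ℕ) (x : ℝ × ℝ) : ℝ × ℝ := ((m : ℝ) * x.1, (m : ℝ) * x.2)

/-- telescoping: for a consistent IPR (objects indexed 1..n),
v_k = z_{kn} satisfies v_k + (n-k-1)·u = Σ_{i=k}^{n-1} z_{i(i+1)}
for k = 1,...,n-1. -/
theorem telescoping_formula (n : ℕ) (hn : 2 ≤ n) (z : ℕ → ℕ → ℝ × ℝ) (ε : ℝ) (hε : 0 ≤ ε)
    (hvalid : ∀ i j, 1 ≤ i → i ≤ n → 1 ≤ j → j ≤ n → (z i j).1 ≤ (z i j).2)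
    (hrec : ∀ i j, 1 ≤ i → i ≤ n → 1 ≤ j → j ≤ n → z i j = Ineg (z j i))
    (hcons : ∀ i j k, 1 ≤ i → i ≤ n → 1 ≤ j → j ≤ n → 1 ≤ k → k ≤ n →
      Iadd (z i j) (-ε, ε) = Iadd (z i k) (z k j)) :
    ∀ k, 1 ≤ k → k ≤ n - 1 →
      Iadd (z k n) (Ismul (n - k - 1) (-ε, ε)) =
        ∑ i ∈ Finset.Icc k (n - 1), z i (i + 1) := by
  have key : ∀ d k, 1 ≤ k → k + d = n - 1 →
      Iadd (z k n) (Ismul (n - k - 1) (-ε, ε)) =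
        ∑ i ∈ Finset.Icc k (n - 1), z i (i + 1) := by
    intro d
    induction d with
    | zero =>
      intro k hk1 hkd
      have hk : k = n - 1 := by omega
      have hk1n : k + 1 = n := by omega
      have h0 : n - k - 1 = 0 := by omega
      subst hk
      rw [h0]
      rw [Finset.Icc_self, Finset.sum_singleton, hk1n]
      simp [Iadd, Ismul]
    | succ d ih =>
      intro k hk1 hkd
      have hkn : k ≤ n := by omega
      have hk1n : k + 1 ≤ n := by omega
      have hle : k ≤ n - 1 := by omega
      have hsplit : Finset.Icc k (n - 1) = insert k (Finset.Icc (k + 1) (n - 1)) := by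
        rw [← Finset.Ioc_insert_left hle, Finset.Icc_add_one_left_eq_Ioc]
      have hni : k ∉ Finset.Icc (k + 1) (n - 1) := by
        simp
      have hih := ih (k + 1) (by omega) (by omega)
      have hc := hcons k n (k + 1) hk1 hkn (by omega) le_rfl (by omega) hk1n
      have hd : n - k - 1 = d + 1 := by omega
      have hd' : n - (k + 1) - 1 = d := by omega
      rw [hd'] at hih
      rw [hsplit, Finset.sum_insert hni, ← hih, hd]
      have hc1 : (z k n).1 + (-ε) = (z k (k+1)).1 + (z (k+1) n).1 := congrArg Prod.fst hc
      have hc2 : (z k n).2 + ε = (z k (k+1)).2 + (z (k+1) n).2 := congrArg Prod.snd hc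
      apply Prod.ext <;>
        simp only [Iadd, Ismul, Prod.fst_add, Prod.snd_add] <;> push_cast <;> linarith
  intro k hk1 hk2
  exact key (n - 1 - k) k hk1 (by omega)
end

section
/- For a consistent IPR with respect to u = [-ε,ε], the top value v₁ = z_{1n} satisfies v₁⁻ = C⁻ + (n-2)ε and v₁⁺ = C⁺ - (n-2)ε, where C⁻ = Σ_{i=1}^{n-1} z_{i(i+1)}⁻ and C⁺ = Σ_{i=1}^{n-1} z_{i(i+1)}⁺. -/
/-- for a consistent IPR (objects 1..n), the top value v₁ = z_{1n}
satisfies v₁⁻ = C⁻ + (n-2)ε and v₁⁺ = C⁺ - (n-2)ε, where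
C± = Σ_{i=1}^{n-1} z_{i(i+1)}±. -/
theorem top_value_endpoints (n : ℕ) (hn : 2 ≤ n) (z : ℕ → ℕ → ℝ × ℝ) (ε : ℝ) (hε : 0 ≤ ε)
    (hvalid : ∀ i j, 1 ≤ i → i ≤ n → 1 ≤ j → j ≤ n → (z i j).1 ≤ (z i j).2)
    (hrec : ∀ i j, 1 ≤ i → i ≤ n → 1 ≤ j → j ≤ n → z i j = Ineg (z j i))
    (hcons : ∀ i j k, 1 ≤ i → i ≤ n → 1 ≤ j → j ≤ n → 1 ≤ k → k ≤ n →
      Iadd (z i j) (-ε, ε) = Iadd (z i k) (z k j)) :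
    (z 1 n).1 = (∑ i ∈ Finset.Icc 1 (n - 1), (z i (i + 1)).1) + ((n : ℝ) - 2) * ε ∧
    (z 1 n).2 = (∑ i ∈ Finset.Icc 1 (n - 1), (z i (i + 1)).2) - ((n : ℝ) - 2) * ε := by
  have key : ∀ k : ℕ, 2 + k ≤ n →
      (z 1 (2 + k)).1 = (∑ i ∈ Finset.Icc 1 (k + 1), (z i (i + 1)).1) + (k : ℝ) * ε ∧
      (z 1 (2 + k)).2 = (∑ i ∈ Finset.Icc 1 (k + 1), (z i (i + 1)).2) - (k : ℝ) * ε := by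
    intro k
    induction k with
    | zero =>
      intro _
      simp
    | succ k ih =>
      intro hk
      have hk' : 2 + k ≤ n := by omega
      obtain ⟨h1, h2⟩ := ih hk'
      have hc := hcons 1 (2 + (k + 1)) (2 + k) (by omega) (by omega) (by omega) hk (by omega) hk'
      have hc1 : (z 1 (2 + (k + 1))).1 + -ε = (z 1 (2 + k)).1 + (z (2 + k) (2 + k + 1)).1 := by
        have := congrArg Prod.fst hc
        simpa [Iadd, show 2 + (k + 1) = 2 + k + 1 from rfl] using this
      have hc2 : (z 1 (2 + (k + 1))).2 + ε = (z 1 (2 + k)).2 + (z (2 + k) (2 + k + 1)).2 := by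
        have := congrArg Prod.snd hc
        simpa [Iadd, show 2 + (k + 1) = 2 + k + 1 from rfl] using this
      have hsum1 : (∑ i ∈ Finset.Icc 1 (k + 1 + 1), (z i (i + 1)).1)
          = (∑ i ∈ Finset.Icc 1 (k + 1), (z i (i + 1)).1) + (z (k + 2) (k + 3)).1 :=
        Finset.sum_Icc_succ_top (by omega) _
      have hsum2 : (∑ i ∈ Finset.Icc 1 (k + 1 + 1), (z i (i + 1)).2)
          = (∑ i ∈ Finset.Icc 1 (k + 1), (z i (i + 1)).2) + (z (k + 2) (k + 3)).2 :=
        Finset.sum_Icc_succ_top (by omega) _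
      simp only [show (2 : ℕ) + k = k + 2 from by omega, show k + 2 + 1 = k + 3 from rfl,
        show (2 : ℕ) + (k + 1) = k + 3 from by omega] at hc1 hc2 h1 h2 ⊢
      constructor
      · rw [hsum1]
        push_cast
        linarith [hc1, h1]
      · rw [hsum2]
        push_cast
        linarith [hc2, h2]
  obtain ⟨h1, h2⟩ := key (n - 2) (by omega)
  have en : 2 + (n - 2) = n := by omega
  have en1 : n - 2 + 1 = n - 1 := by omega
  have ec : ((n - 2 : ℕ) : ℝ) = (n : ℝ) - 2 := by
    push_cast [Nat.cast_sub hn]; ring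
  rw [en, en1, ec] at h1 h2
  exact ⟨h1, h2⟩
end

section
/- Crisp reduction theorem: an IPR Z is consistent with respect to u = [-ε,ε] if and only if the real matrix X with x_{ij} = (z_{ij}⁻ + z_{ij}⁺)/2 satisfies x_{ij} = x_{ik} + x_{kj} for all i,j,k and every entry of Z has the form z_{ij} = [x_{ij} - ε, x_{ij} + ε]. -/
/-- crisp reduction: a reciprocal IPR Z is consistent w.r.t.
u = [-ε,ε] iff the midpoint matrix x_{ij} = (z_{ij}⁻+z_{ij}⁺)/2 is additively
consistent and every entry satisfies z_{ij} = [x_{ij}-ε, x_{ij}+ε]. -/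
theorem crisp_reduction {n : ℕ} (z : Fin n → Fin n → ℝ × ℝ) (ε : ℝ) (hε : 0 ≤ ε)
    (hvalid : ∀ i j, (z i j).1 ≤ (z i j).2)
    (hrec : ∀ i j, z i j = Ineg (z j i)) :
    (∀ i j k, Iadd (z i j) (-ε, ε) = Iadd (z i k) (z k j)) ↔
      ((∀ i j k, ((z i j).1 + (z i j).2) / 2 =
          ((z i k).1 + (z i k).2) / 2 + ((z k j).1 + (z k j).2) / 2) ∧
        ∀ i j, z i j =
          (((z i j).1 + (z i j).2) / 2 - ε, ((z i j).1 + (z i j).2) / 2 + ε)) := by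
  constructor
  · intro h
    have h1 : ∀ i j k, (z i j).1 + (-ε) = (z i k).1 + (z k j).1 := fun i j k =>
      congrArg Prod.fst (h i j k)
    have h2 : ∀ i j k, (z i j).2 + ε = (z i k).2 + (z k j).2 := fun i j k =>
      congrArg Prod.snd (h i j k)
    constructor
    · intro i j k
      have := h1 i j k
      have := h2 i j k
      linarith
    · intro i j
      -- diagonal: (z i i).1 = -ε, (z i i).2 = ε
      have hd1 : (z i i).1 = -ε := by have := h1 i i i; linarith
      -- width of z i j is 2ε
      have hr : (z j i).1 = -(z i j).2 := by
        have := hrec j i; rw [this]; simp [Ineg]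
      have hw : (z i j).2 - (z i j).1 = 2 * ε := by
        have := h1 i i j
        rw [hd1, hr] at this
        linarith
      have e1 : (z i j).1 = ((z i j).1 + (z i j).2) / 2 - ε := by linarith
      have e2 : (z i j).2 = ((z i j).1 + (z i j).2) / 2 + ε := by linarith
      exact Prod.ext e1 e2
  · rintro ⟨hmid, hform⟩ i j k
    have eij := hform i j
    have eik := hform i k
    have ekj := hform k j
    have hm := hmid i j k
    apply Prod.ext
    · simp only [Iadd]
      rw [eij, eik, ekj] at *
      simp at *
      linarith
    · simp only [Iadd]
      rw [eij, eik, ekj] at *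
      simp at *
      linarith
end

section
/- The function F(ν, α) = (1/(2n²)) Σ_{i,j} [(z_{ij}⁺ - (ν_i - ν_j + α))² + (z_{ij}⁻ - (ν_i - ν_j - α))²] has a critical point (all partial derivatives vanish) at any (ν, α) satisfying ν_k = (1/n)Σ_j ν_j + (1/n)Σ_j c_{kj} for all k and α = (1/(2n²)) Σ_{i,j} ℓ_{ij}, where c_{ij} = (z_{ij}⁺ + z_{ij}⁻)/2 and ℓ_{ij} = z_{ij}⁺ - z_{ij}⁻, assuming Z is reciprocal (z_{ij}⁺ = -z_{ji}⁻ and z_{ij}⁻ = -z_{ji}⁺). -/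
open Finset in
/-- The least-squares objective of Model (M_{l₂}):
F(ν,α) = (1/(2n²)) Σ_{i,j} [(z_{ij}⁺ - (ν_i - ν_j + α))² + (z_{ij}⁻ - (ν_i - ν_j - α))²]. -/
noncomputable def Fobj (n : ℕ) (z : Fin n → Fin n → ℝ × ℝ) :
    ((Fin n → ℝ) × ℝ) → ℝ := fun p =>
  (1 / (2 * (n : ℝ) ^ 2)) * ∑ i : Fin n, ∑ j : Fin n,
    (((z i j).2 - (p.1 i - p.1 j + p.2)) ^ 2 +
     ((z i j).1 - (p.1 i - p.1 j - p.2)) ^ 2)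

open Finset in
lemma sum_scalar_zero (n : ℕ) (z : Fin n → Fin n → ℝ × ℝ) (ν v : Fin n → ℝ) (α a : ℝ)
    (hanti : ∀ i j, (z i j).2 + (z i j).1 = -((z j i).2 + (z j i).1))
    (hrow : ∀ k, ∑ j : Fin n, ((z k j).2 + (z k j).1)
      = 2 * ((n:ℝ) * ν k - ∑ j : Fin n, ν j))
    (hT3 : ∑ i : Fin n, ∑ j : Fin n, ((z i j).2 - (z i j).1) = 2 * (n:ℝ)^2 * α) :
    ∑ i : Fin n, ∑ j : Fin n,
      (((z i j).2 - (ν i - ν j + α)) * (0 - (v i - v j + a)) +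
       ((z i j).2 - (ν i - ν j + α)) * (0 - (v i - v j + a)) +
       (((z i j).1 - (ν i - ν j - α)) * (0 - (v i - v j - a)) +
        ((z i j).1 - (ν i - ν j - α)) * (0 - (v i - v j - a)))) = 0 := by
  have hT2 : ∑ i : Fin n, ∑ j : Fin n, ((ν i - ν j) * (v i - v j))
      = 2*(n:ℝ)*(∑ k : Fin n, ν k * v k) - 2*(∑ k : Fin n, ν k)*(∑ k : Fin n, v k) := by
    have e : ∀ i j : Fin n, (ν i - ν j) * (v i - v j)
        = ν i * v i + ν j * v j - ν i * v j - ν j * v i := by intros; ring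
    simp only [e, Finset.sum_sub_distrib, Finset.sum_add_distrib, ← Finset.mul_sum,
      ← Finset.sum_mul, Finset.sum_const, card_univ, Fintype.card_fin, nsmul_eq_mul]
    have e2 : ∑ x : Fin n, ν x * ((n:ℝ) * v x) = (n:ℝ) * ∑ x : Fin n, ν x * v x := by
      rw [Finset.mul_sum]; exact Finset.sum_congr rfl fun x _ => by ring
    rw [e2]; ring
  have hT1 : ∑ i : Fin n, ∑ j : Fin n, (((z i j).2 + (z i j).1) * (v i - v j))
      = 4*(n:ℝ)*(∑ k : Fin n, ν k * v k) - 4*(∑ k : Fin n, ν k)*(∑ k : Fin n, v k) := by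
    have inner1 : ∀ i, ∑ j : Fin n, (((z i j).2 + (z i j).1) * (v i - v j))
        = (2 * ((n:ℝ) * ν i - ∑ k : Fin n, ν k)) * v i
          - ∑ j : Fin n, (((z i j).2 + (z i j).1) * v j) := by
      intro i
      rw [← hrow i, Finset.sum_mul, ← Finset.sum_sub_distrib]
      exact Finset.sum_congr rfl fun j _ => by ring
    have hcol : ∀ j, ∑ i : Fin n, ((z i j).2 + (z i j).1)
        = -(2 * ((n:ℝ) * ν j - ∑ k : Fin n, ν k)) := by
      intro j
      rw [Finset.sum_congr rfl fun i _ => hanti i j, Finset.sum_neg_distrib, hrow j]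
    have h2nd : ∑ i : Fin n, ∑ j : Fin n, (((z i j).2 + (z i j).1) * v j)
        = ∑ k : Fin n, (-(2 * ((n:ℝ) * ν k - ∑ k : Fin n, ν k))) * v k := by
      rw [Finset.sum_comm]
      refine Finset.sum_congr rfl fun j _ => ?_
      rw [← Finset.sum_mul, hcol j]
    rw [Finset.sum_congr rfl fun i _ => inner1 i, Finset.sum_sub_distrib, h2nd,
      ← Finset.sum_sub_distrib]
    have e : ∀ k : Fin n, (2 * ((n:ℝ) * ν k - ∑ k : Fin n, ν k)) * v k
        - (-(2 * ((n:ℝ) * ν k - ∑ k : Fin n, ν k))) * v k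
        = 4*(n:ℝ) * (ν k * v k) - (4*(∑ k : Fin n, ν k)) * v k := by intros; ring
    simp only [e, Finset.sum_sub_distrib, ← Finset.mul_sum]
  calc ∑ i : Fin n, ∑ j : Fin n,
      (((z i j).2 - (ν i - ν j + α)) * (0 - (v i - v j + a)) +
       ((z i j).2 - (ν i - ν j + α)) * (0 - (v i - v j + a)) +
       (((z i j).1 - (ν i - ν j - α)) * (0 - (v i - v j - a)) +
        ((z i j).1 - (ν i - ν j - α)) * (0 - (v i - v j - a))))
      = ∑ i : Fin n, ∑ j : Fin n,
        ((-2) * (((z i j).2 + (z i j).1) * (v i - v j)) + 4 * ((ν i - ν j) * (v i - v j))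
          + (-2*a) * ((z i j).2 - (z i j).1) + 4 * (α * a)) :=
        Finset.sum_congr rfl fun i _ => Finset.sum_congr rfl fun j _ => by ring
    _ = 0 := by
        simp only [Finset.sum_add_distrib, ← Finset.mul_sum, Finset.sum_const, card_univ,
          Fintype.card_fin, nsmul_eq_mul]
        rw [hT1, hT2, hT3]
        ring

open Finset in
/-- F has a critical point (vanishing derivative) at any (ν,α) with
ν_k = (1/n)Σ_j ν_j + (1/n)Σ_j c_{kj} and α = (1/(2n²)) Σ_{i,j} ℓ_{ij},
for a reciprocal interval matrix Z. -/
theorem critical_point_Fobj (n : ℕ) (hn : 0 < n) (z : Fin n → Fin n → ℝ × ℝ)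
    (hvalid : ∀ i j, (z i j).1 ≤ (z i j).2)
    (hrec : ∀ i j, (z i j).2 = -(z j i).1 ∧ (z i j).1 = -(z j i).2)
    (ν : Fin n → ℝ) (α : ℝ)
    (hν : ∀ k, ν k = (1 / (n : ℝ)) * (∑ j : Fin n, ν j) +
      (1 / (n : ℝ)) * ∑ j : Fin n, ((z k j).2 + (z k j).1) / 2)
    (hα : α = (1 / (2 * (n : ℝ) ^ 2)) * ∑ i : Fin n, ∑ j : Fin n,
      ((z i j).2 - (z i j).1)) :
    fderiv ℝ (Fobj n z) (ν, α) = 0 := by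
  have hn' : (n:ℝ) ≠ 0 := Nat.cast_ne_zero.mpr hn.ne'
  have hanti : ∀ i j, (z i j).2 + (z i j).1 = -((z j i).2 + (z j i).1) := by
    intro i j
    rw [(hrec i j).1, (hrec i j).2]; ring
  have hrow : ∀ k, ∑ j : Fin n, ((z k j).2 + (z k j).1)
      = 2 * ((n:ℝ) * ν k - ∑ j : Fin n, ν j) := by
    intro k
    have h := hν k
    rw [← Finset.sum_div] at h
    field_simp at h
    have h2 : (∑ j : Fin n, ((z k j).2 + (z k j).1)) * (n:ℝ)
        = (2 * ((n:ℝ) * ν k - ∑ j : Fin n, ν j)) * (n:ℝ) := by linear_combination (-(n:ℝ)) * h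
    exact mul_right_cancel₀ hn' h2
  have hT3 : ∑ i : Fin n, ∑ j : Fin n, ((z i j).2 - (z i j).1) = 2 * (n:ℝ)^2 * α := by
    rw [hα]; field_simp
  let E := ((Fin n → ℝ) × ℝ)
  let snd' : E →L[ℝ] ℝ := ContinuousLinearMap.snd ℝ _ _
  let P : Fin n → (E →L[ℝ] ℝ) := fun i =>
    (ContinuousLinearMap.proj i).comp (ContinuousLinearMap.fst ℝ (Fin n → ℝ) ℝ)
  have hPi : ∀ i, HasFDerivAt (fun q : E => q.1 i) (P i) (ν, α) := fun i => (P i).hasFDerivAt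
  have hsnd : HasFDerivAt (fun q : E => q.2) snd' (ν, α) := snd'.hasFDerivAt
  let D : Fin n → Fin n → (E →L[ℝ] ℝ) := fun i j =>
    ((((z i j).2 - (ν i - ν j + α)) • (0 - (P i - P j + snd')) +
      ((z i j).2 - (ν i - ν j + α)) • (0 - (P i - P j + snd'))) +
     (((z i j).1 - (ν i - ν j - α)) • (0 - (P i - P j - snd')) +
      ((z i j).1 - (ν i - ν j - α)) • (0 - (P i - P j - snd'))))
  have key : ∀ (i j : Fin n), HasFDerivAt
      (fun q : E => ((z i j).2 - (q.1 i - q.1 j + q.2)) ^ 2 +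
        ((z i j).1 - (q.1 i - q.1 j - q.2)) ^ 2) (D i j) (ν, α) := by
    intro i j
    have h1 : HasFDerivAt (fun q : E => (z i j).2 - (q.1 i - q.1 j + q.2))
        (0 - (P i - P j + snd')) (ν, α) :=
      (hasFDerivAt_const _ _).sub (((hPi i).sub (hPi j)).add hsnd)
    have h2 : HasFDerivAt (fun q : E => (z i j).1 - (q.1 i - q.1 j - q.2))
        (0 - (P i - P j - snd')) (ν, α) :=
      (hasFDerivAt_const _ _).sub (((hPi i).sub (hPi j)).sub hsnd)
    have := (h1.mul h1).add (h2.mul h2)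
    simp only [← pow_two] at this
    exact this
  have hF : HasFDerivAt (Fobj n z)
      ((1 / (2 * (n : ℝ) ^ 2)) • ∑ i : Fin n, ∑ j : Fin n, D i j) (ν, α) :=
    (HasFDerivAt.fun_sum fun i (_ : i ∈ Finset.univ) =>
      HasFDerivAt.fun_sum fun j (_ : j ∈ Finset.univ) => key i j).const_mul (1 / (2 * (n : ℝ) ^ 2))
  rw [hF.fderiv]
  refine ContinuousLinearMap.ext fun x => ?_
  simp only [D, P, snd', ContinuousLinearMap.smul_apply, ContinuousLinearMap.coe_sum',
    Finset.sum_apply, ContinuousLinearMap.add_apply, ContinuousLinearMap.sub_apply,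
    ContinuousLinearMap.zero_apply, ContinuousLinearMap.coe_comp',
    ContinuousLinearMap.coe_fst', ContinuousLinearMap.coe_snd',
    ContinuousLinearMap.proj_apply, ContinuousLinearMap.zero_apply, Function.comp,
    smul_eq_mul, ContinuousLinearMap.zero_apply]
  rw [sum_scalar_zero n z ν x.1 α x.2 hanti hrow hT3, mul_zero]
end

section
/- If Z is a consistent IPR with respect to u and z_{i(i+1)} ≥₀ u for all i = 1,...,n-1, then z_{ij} ≥₀ u for all i < j (transitive positivity of the consistent relation). -/
/-- Componentwise partial order ≤₀ on intervals. -/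
def Ile (x y : ℝ × ℝ) : Prop := x.1 ≤ y.1 ∧ x.2 ≤ y.2

/-- transitive positivity: if Z (objects 1..n) is a consistent
IPR w.r.t. u = [-ε,ε] and z_{i(i+1)} ≥₀ u for i = 1,...,n-1, then z_{ij} ≥₀ u
for all i < j. -/
theorem transitive_positivity (n : ℕ) (z : ℕ → ℕ → ℝ × ℝ) (ε : ℝ) (hε : 0 ≤ ε)
    (hvalid : ∀ i j, 1 ≤ i → i ≤ n → 1 ≤ j → j ≤ n → (z i j).1 ≤ (z i j).2)
    (hrec : ∀ i j, 1 ≤ i → i ≤ n → 1 ≤ j → j ≤ n → z i j = Ineg (z j i))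
    (hcons : ∀ i j k, 1 ≤ i → i ≤ n → 1 ≤ j → j ≤ n → 1 ≤ k → k ≤ n →
      Iadd (z i j) (-ε, ε) = Iadd (z i k) (z k j))
    (hord : ∀ i, 1 ≤ i → i ≤ n - 1 → Ile (-ε, ε) (z i (i + 1))) :
    ∀ i j, 1 ≤ i → i < j → j ≤ n → Ile (-ε, ε) (z i j) := by
  intro i j
  induction j with
  | zero => omega
  | succ j ih =>
    intro hi hij hjn
    rcases Nat.lt_or_ge i j with hlt | hge
    · have h1 := ih hi hlt (by omega)
      have h2 := hord j (by omega) (by omega)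
      have hc := hcons i (j + 1) j hi (by omega) (by omega) hjn (by omega) (by omega)
      simp only [Iadd, Ile, Prod.mk.injEq] at *
      obtain ⟨e1, e2⟩ := hc
      constructor <;> linarith [h1.1, h1.2, h2.1, h2.2]
    · have hij' : i = j := by omega
      subst hij'
      exact hord i hi (by omega)
end
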